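/- Let E be a field of characteristic zero, σ a ring automorphism of E with σ∘σ = id, V a finite-dimensional E-vector space, Φ a nondegenerate σ-hermitian form on V, A an endomorphism of V that is self-adjoint for Φ, and b ∈ V. Then det((Φ(A^i(b), A^j(b)))_{0 ≤ i,j ≤ r-1}) = 0 for every integer r ≥ 1 if and only if Φ(b, A^i(b)) = 0 for every integer i ≥ 0. -/

import Mathlib

/-- A `σ`-hermitian form on a vector space `V` over `E`: additive in each variable,
`σ`-semilinear in the first, linear in the second, with `Φ (y, x) = σ (Φ (x, y))`. -/
def IsHermitianForm {E V : Type*} [Field E] [AddCommGroup V] [Module E V]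
    (σ : E → E) (Φ : V → V → E) : Prop :=
  (∀ x x' y, Φ (x + x') y = Φ x y + Φ x' y) ∧
  (∀ x y y', Φ x (y + y') = Φ x y + Φ x y') ∧
  (∀ (a : E) (x y : V), Φ (a • x) y = σ a * Φ x y) ∧
  (∀ (a : E) (x y : V), Φ x (a • y) = a * Φ x y) ∧
  (∀ x y, Φ y x = σ (Φ x y))

/-- For a nondegenerate `σ`-hermitian form `Φ`, an endomorphism `A`
self-adjoint for `Φ` and a vector `b`, the determinants
`det ((Φ (A^i b, A^j b))_{0 ≤ i,j ≤ r-1})` vanish for all `r ≥ 1` if and only if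
`Φ (b, A^i b) = 0` for all `i ≥ 0`. -/
theorem stmt_11 (E : Type*) [Field E] [CharZero E]
    (V : Type*) [AddCommGroup V] [Module E V] [FiniteDimensional E V]
    (σ : E ≃+* E) (hσ : ∀ x, σ (σ x) = x)
    (Φ : V → V → E) (hΦ : IsHermitianForm (⇑σ) Φ)
    (hnd : ∀ x, (∀ y, Φ x y = 0) → x = 0)
    (A : V →ₗ[E] V) (hA : ∀ x y, Φ (A x) y = Φ x (A y)) (b : V) :
    (∀ r : ℕ, 1 ≤ r →
        (Matrix.of fun i j : Fin r => Φ ((A ^ (i : ℕ)) b) ((A ^ (j : ℕ)) b)).det = 0) ↔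
      ∀ i : ℕ, Φ b ((A ^ i) b) = 0 := by
  -- A^i is self-adjoint for every i
  have hAi : ∀ (i : ℕ) (x y : V), Φ ((A ^ i) x) y = Φ x ((A ^ i) y) := by
    intro i
    induction i with
    | zero => intro x y; simp
    | succ i ih =>
      intro x y
      rw [pow_succ, Module.End.mul_apply, ih, hA]
      congr 1
      rw [pow_mul_comm', Module.End.mul_apply]
  have key : ∀ i j : ℕ, Φ ((A ^ i) b) ((A ^ j) b) = Φ b ((A ^ (i + j)) b) := by
    intro i j
    rw [hAi, ← Module.End.mul_apply, ← pow_add]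
  constructor
  · -- hard direction
    intro hdet i
    classical
    by_contra hc
    have hex : ∃ k, Φ b ((A ^ k) b) ≠ 0 := ⟨i, hc⟩
    set n := Nat.find hex with hndef
    have hn : Φ b ((A ^ n) b) ≠ 0 := Nat.find_spec hex
    have hmin : ∀ k, k < n → Φ b ((A ^ k) b) = 0 := by
      intro k hk
      have := Nat.find_min hex hk
      simpa using this
    set M : Matrix (Fin (n + 1)) (Fin (n + 1)) E :=
      Matrix.of fun i j : Fin (n + 1) => Φ ((A ^ (i : ℕ)) b) ((A ^ (j : ℕ)) b) with hM
    have hMdet : M.det = 0 := hdet (n + 1) (Nat.le_add_left 1 n)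
    -- reverse the rows
    set N : Matrix (Fin (n + 1)) (Fin (n + 1)) E := M.submatrix Fin.rev id with hN
    have hNdet : N.det = 0 := by
      have h := Matrix.det_permute (Fin.revPerm : Equiv.Perm (Fin (n + 1))) M
      rw [hMdet, mul_zero] at h
      simpa [hN, Fin.revPerm] using h
    -- N is upper triangular with diagonal entries Φ b (A^n b)
    have hentry : ∀ i j : Fin (n + 1), N i j = Φ b ((A ^ ((n - (i : ℕ)) + (j : ℕ))) b) := by
      intro i j
      simp only [hN, hM, Matrix.submatrix_apply, Matrix.of_apply, id_eq]
      rw [key, Fin.val_rev, show n + 1 - ((i : ℕ) + 1) = n - (i : ℕ) from by omega]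
    have htri : N.BlockTriangular id := by
      intro i j hij
      rw [hentry]
      apply hmin
      have hi : (i : ℕ) ≤ n := Nat.lt_succ_iff.mp i.isLt
      have : (j : ℕ) < (i : ℕ) := hij
      omega
    have hconst : ∀ i : Fin (n + 1), N i i = Φ b ((A ^ n) b) := by
      intro i
      have hi : (i : ℕ) ≤ n := Nat.lt_succ_iff.mp i.isLt
      rw [hentry, show n - (i : ℕ) + (i : ℕ) = n from by omega]
    have hdiag : N.det = (Φ b ((A ^ n) b)) ^ (n + 1) := by
      rw [Matrix.det_of_upperTriangular htri,
        Finset.prod_congr rfl (fun i _ => hconst i)]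
      simp
    rw [hdiag] at hNdet
    exact hn (pow_eq_zero_iff (Nat.succ_ne_zero n) |>.mp hNdet)
  · -- easy direction
    intro h r hr
    have : (Matrix.of fun i j : Fin r => Φ ((A ^ (i : ℕ)) b) ((A ^ (j : ℕ)) b)) = 0 := by
      ext i j
      simp only [Matrix.of_apply, Matrix.zero_apply]
      rw [key]
      exact h _
    rw [this]
    haveI : Nonempty (Fin r) := ⟨⟨0, hr⟩⟩
    exact Matrix.det_zero
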